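/- Let s ≥ 1, 0 ≤ α ≤ s, and β > 3/2. There exists a constant C = C(s,α,β) > 0 such that for every smooth divergence-free vector field b on 𝕋³ and every smooth function V on 𝕋³ one has ‖Λ^{−α} [Λ^s, b·∇] V‖_{L²(𝕋³)} ≤ C ‖b‖_{H^{s+α+β}} ‖V‖_{H^{s−α}}. -/

import Mathlib

/-!
We model functions on the torus `𝕋³ = ℝ³/ℤ³` by their Fourier coefficients,
indexed by `n ∈ ℤ³` (the actual frequency being `k = 2πn ∈ 2πℤ³`).
Smoothness corresponds to rapid decay of the Fourier coefficients, real-valuedness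
to the usual conjugation symmetry, products to convolution of coefficients, and
the `L²` norm/inner product are given by Plancherel.
-/

noncomputable section

open scoped BigOperators
open Complex

/-- Fourier frequencies of functions on `𝕋³`, indexed by `n ∈ ℤ³`; the actual
frequency is `k = 2πn ∈ 2πℤ³`. -/
abbrev Z3 : Type := Fin 3 → ℤ

/-- The Euclidean length `|k|` of the frequency `k = 2πn`. -/
def knorm (n : Z3) : ℝ := 2 * Real.pi * Real.sqrt (∑ i, ((n i : ℝ)) ^ 2)

/-- `Λ^s = (−Δ)^{s/2}` as a Fourier multiplier: `(Λ^s f)^_k = |k|^s f^_k`. -/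
def lam (s : ℝ) (c : Z3 → ℂ) : Z3 → ℂ :=
  fun n => Complex.ofReal (knorm n ^ s) * c n

/-- Squared `L²(𝕋³)` norm (Plancherel). -/
def l2sq (c : Z3 → ℂ) : ℝ := ∑' n : Z3, ‖c n‖ ^ 2

/-- `L²(𝕋³)` norm. -/
def l2norm (c : Z3 → ℂ) : ℝ := Real.sqrt (l2sq c)

/-- `L²(𝕋³)` inner product of two real-valued functions (Plancherel). -/
def inner2 (c d : Z3 → ℂ) : ℝ := (∑' n : Z3, c n * (starRingEnd ℂ) (d n)).re

/-- Sobolev `H^σ` norm: `(∑_k (1+|k|^{2σ})|f^_k|²)^{1/2}`. -/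
def hnorm (σ : ℝ) (c : Z3 → ℂ) : ℝ :=
  Real.sqrt (∑' n : Z3, (1 + knorm n ^ (2 * σ)) * ‖c n‖ ^ 2)

/-- The partial derivative `∂_j` as a Fourier multiplier. -/
def pd (j : Fin 3) (c : Z3 → ℂ) : Z3 → ℂ :=
  fun n => Complex.I * Complex.ofReal (2 * Real.pi * (n j : ℝ)) * c n

/-- Pointwise product of two functions = convolution of Fourier coefficients. -/
def conv (c d : Z3 → ℂ) : Z3 → ℂ := fun n => ∑' m : Z3, c m * d (n - m)

/-- The coefficients of a real-valued function. -/
def IsRealFn (c : Z3 → ℂ) : Prop := ∀ n : Z3, c (-n) = (starRingEnd ℂ) (c n)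

/-- Rapid decay of the Fourier coefficients, i.e. smoothness of the function. -/
def RapidDecay (c : Z3 → ℂ) : Prop :=
  ∀ N : ℕ, ∃ C : ℝ, ∀ n : Z3, ‖c n‖ * (1 + knorm n) ^ N ≤ C

/-- A smooth real-valued function on `𝕋³`, described by its Fourier coefficients. -/
def SmoothFun (c : Z3 → ℂ) : Prop := IsRealFn c ∧ RapidDecay c

/-- Zero mean. -/
def ZeroMean (c : Z3 → ℂ) : Prop := c 0 = 0

/-- A divergence-free vector field `b = (b¹,b²,b³)`: `∀ k, ∑_j k_j b^j_k = 0`. -/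
def DivFree (b : Fin 3 → Z3 → ℂ) : Prop :=
  ∀ n : Z3, ∑ j : Fin 3, (n j : ℂ) * b j n = 0

/-- The transport operator `b·∇ = b¹∂_{x₁} + b²∂_{x₂} + b³∂_z`. -/
def transport (b : Fin 3 → Z3 → ℂ) (c : Z3 → ℂ) : Z3 → ℂ :=
  fun n => ∑ j : Fin 3, conv (b j) (pd j c) n

/-- The commutator `[Λ^s, b·∇]`. -/
def commLam (s : ℝ) (b : Fin 3 → Z3 → ℂ) (c : Z3 → ℂ) : Z3 → ℂ :=
  lam s (transport b c) - transport b (lam s c)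

/-- `H^σ` norm of a 3-component vector field. -/
def hnormV3 (σ : ℝ) (b : Fin 3 → Z3 → ℂ) : ℝ :=
  Real.sqrt (∑ j : Fin 3, (hnorm σ (b j)) ^ 2)

/-- `Λ^s` acting componentwise on ℝ²-valued functions. -/
def lamV (s : ℝ) (V : Fin 2 → Z3 → ℂ) : Fin 2 → Z3 → ℂ := fun i => lam s (V i)

/-- `b·∇` acting componentwise on ℝ²-valued functions. -/
def transportV (b : Fin 3 → Z3 → ℂ) (V : Fin 2 → Z3 → ℂ) : Fin 2 → Z3 → ℂ :=
  fun i => transport b (V i)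

/-- `[Λ^s, b·∇]` acting componentwise on ℝ²-valued functions. -/
def commLamV (s : ℝ) (b : Fin 3 → Z3 → ℂ) (V : Fin 2 → Z3 → ℂ) : Fin 2 → Z3 → ℂ :=
  fun i => commLam s b (V i)

/-- `L²` norm of an ℝ²-valued function. -/
def l2normV (V : Fin 2 → Z3 → ℂ) : ℝ := Real.sqrt (∑ i : Fin 2, l2sq (V i))

/-- `L²` inner product of ℝ²-valued functions. -/
def inner2V (V W : Fin 2 → Z3 → ℂ) : ℝ := ∑ i : Fin 2, inner2 (V i) (W i)

/-- `H^σ` norm of an ℝ²-valued function. -/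
def hnormV2 (σ : ℝ) (V : Fin 2 → Z3 → ℂ) : ℝ :=
  Real.sqrt (∑ i : Fin 2, (hnorm σ (V i)) ^ 2)

/-- The hydrostatic Leray projection `𝒫φ = φ − ∇_h Δ_h^{-1} ∇_h · φ̄` as a Fourier
multiplier: the barotropic part `φ̄` consists of the modes with `n₃ = 0`, on which
`∇_h Δ_h^{-1} ∇_h ·` acts as `φ̂ ↦ n_h (n_h · φ̂)/|n_h|²` (for `n_h ≠ 0`). -/
def hproj (V : Fin 2 → Z3 → ℂ) : Fin 2 → Z3 → ℂ := fun i n =>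
  if n 2 = 0 ∧ ¬(n 0 = 0 ∧ n 1 = 0) then
    V i n - (n i.castSucc : ℂ) * ((n 0 : ℂ) * V 0 n + (n 1 : ℂ) * V 1 n) /
      (((n 0 : ℂ)) ^ 2 + ((n 1 : ℂ)) ^ 2)
  else V i n

/-- `ℚ = I − 𝒫`. -/
def qproj (V : Fin 2 → Z3 → ℂ) : Fin 2 → Z3 → ℂ := fun i => V i - hproj V i

/-- The commutator `[𝒫, b·∇]` on ℝ²-valued functions. -/
def commProj (b : Fin 3 → Z3 → ℂ) (V : Fin 2 → Z3 → ℂ) : Fin 2 → Z3 → ℂ :=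
  fun i => hproj (transportV b V) i - transportV b (hproj V) i

/-- A smooth ℝ²-valued function on `𝕋³`. -/
def SmoothV2 (V : Fin 2 → Z3 → ℂ) : Prop := ∀ i, SmoothFun (V i)

/-- A smooth vector field on `𝕋³`. -/
def SmoothV3 (b : Fin 3 → Z3 → ℂ) : Prop := ∀ j, SmoothFun (b j)

/-- `∂_z b^h = ∂_z (b¹, b²)`. -/
def dzbh (b : Fin 3 → Z3 → ℂ) : Fin 2 → Z3 → ℂ := fun i => pd 2 (b i.castSucc)

/-- `𝒫B V = 𝒫(b·∇V)`. -/
def PB (b : Fin 3 → Z3 → ℂ) (V : Fin 2 → Z3 → ℂ) : Fin 2 → Z3 → ℂ :=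
  hproj (transportV b V)

/- ==================== Auxiliary lemmas ==================== -/

section Aux

open Real

lemma knorm_nonneg (n : Z3) : 0 ≤ knorm n := by
  unfold knorm
  positivity

lemma knorm_zero : knorm 0 = 0 := by
  simp [knorm]

lemma knorm_neg (n : Z3) : knorm (-n) = knorm n := by
  simp [knorm]

/-- Euclidean embedding. -/
def emb (n : Z3) : EuclideanSpace ℝ (Fin 3) := WithLp.toLp 2 (fun i => (n i : ℝ))

lemma knorm_eq (n : Z3) : knorm n = 2 * Real.pi * ‖emb n‖ := by
  rw [EuclideanSpace.norm_eq]
  unfold knorm emb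
  simp [Real.norm_eq_abs, sq_abs]

lemma knorm_triangle (a b : Z3) : knorm (a + b) ≤ knorm a + knorm b := by
  have h : emb (a + b) = emb a + emb b := by
    ext i; simp [emb]
  rw [knorm_eq, knorm_eq, knorm_eq, h, ← mul_add]
  have := norm_add_le (emb a) (emb b)
  nlinarith [Real.pi_pos]

lemma one_le_knorm {n : Z3} (hn : n ≠ 0) : 1 ≤ knorm n := by
  have h1 : (1:ℝ) ≤ Real.sqrt (∑ i, ((n i : ℝ)) ^ 2) := by
    rw [show (1:ℝ) = Real.sqrt 1 by simp]
    apply Real.sqrt_le_sqrt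
    obtain ⟨j, hj⟩ : ∃ j, n j ≠ 0 := by
      by_contra h
      push_neg at h
      exact hn (funext h)
    have h2 : (1:ℝ) ≤ ((n j : ℝ)) ^ 2 := by
      have : (1:ℤ) ≤ (n j)^2 := by
        rcases lt_or_gt_of_ne hj with h | h <;> nlinarith
      exact_mod_cast this
    calc (1:ℝ) ≤ ((n j : ℝ))^2 := h2
      _ ≤ ∑ i, ((n i : ℝ))^2 := Finset.single_le_sum (f := fun i => ((n i:ℝ))^2)
          (fun i _ => sq_nonneg _) (Finset.mem_univ j)
  unfold knorm
  nlinarith [Real.pi_gt_three]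

lemma knorm_pos {n : Z3} (hn : n ≠ 0) : 0 < knorm n :=
  lt_of_lt_of_le one_pos (one_le_knorm hn)

lemma coord_le_knorm (n : Z3) (j : Fin 3) : 2 * Real.pi * |(n j : ℝ)| ≤ knorm n := by
  unfold knorm
  have h : |(n j : ℝ)| ≤ Real.sqrt (∑ i, ((n i : ℝ)) ^ 2) := by
    rw [← Real.sqrt_sq_eq_abs]
    apply Real.sqrt_le_sqrt
    exact Finset.single_le_sum (f := fun i => ((n i:ℝ))^2) (fun i _ => sq_nonneg _)
      (Finset.mem_univ j)
  nlinarith [Real.pi_pos, abs_nonneg ((n j : ℝ))]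

lemma abs_coord_le_knorm (n : Z3) (j : Fin 3) : |(n j : ℝ)| ≤ knorm n := by
  have := coord_le_knorm n j
  nlinarith [Real.pi_gt_three, abs_nonneg ((n j : ℝ))]

end Aux
section RealIneq

open Real

/-- `x^s − y^s ≤ s (x−y) x^{s−1}` for `0 < y ≤ x`, `1 ≤ s`. -/
lemma rpow_sub_rpow_le {x y s : ℝ} (hy : 0 < y) (hxy : y ≤ x) (hs : 1 ≤ s) :
    x ^ s - y ^ s ≤ s * (x - y) * x ^ (s - 1) := by
  have hx : 0 < x := lt_of_lt_of_le hy hxy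
  have hq0 : 0 ≤ y / x := by positivity
  have hq1 : y / x ≤ 1 := div_le_one_of_le₀ hxy hx.le
  have hb : 1 + s * (y / x - 1) ≤ (1 + (y / x - 1)) ^ s :=
    one_add_mul_self_le_rpow_one_add (by linarith) hs
  have hb' : 1 + s * (y / x - 1) ≤ (y / x) ^ s := by
    convert hb using 2; ring
  have hyx : (y / x) ^ s * x ^ s = y ^ s := by
    rw [← Real.mul_rpow hq0 hx.le, div_mul_cancel₀ _ hx.ne']
  have hxs : 0 < x ^ s := Real.rpow_pos_of_pos hx s
  have key : x ^ s - y ^ s ≤ x ^ s * (s * (1 - y / x)) := by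
    have h2 : x ^ s * (1 + s * (y / x - 1)) ≤ x ^ s * (y / x) ^ s :=
      mul_le_mul_of_nonneg_left hb' hxs.le
    rw [mul_comm (x ^ s) ((y/x)^s), hyx] at h2
    nlinarith
  calc x ^ s - y ^ s ≤ x ^ s * (s * (1 - y / x)) := key
    _ = s * (x - y) * (x ^ s / x) := by field_simp
    _ = s * (x - y) * x ^ (s - 1) := by rw [← Real.rpow_sub_one hx.ne']

/-- The key multiplier estimate. -/
lemma multiplier_est {s α a c mb : ℝ} (hs : 1 ≤ s) (hα0 : 0 ≤ α) (hαs : α ≤ s)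
    (ha : 1 ≤ a) (hc : c = 0 ∨ 1 ≤ c) (hm : |a - c| ≤ mb) :
    a ^ (-α) * |a ^ s - c ^ s| * c ≤ s * ((1 + mb) ^ (s + α) * (1 + c) ^ (s - α)) := by
  have hmb0 : 0 ≤ mb := le_trans (abs_nonneg _) hm
  have ha0 : 0 < a := lt_of_lt_of_le one_pos ha
  have hcnn : 0 ≤ c := by
    rcases hc with h | h
    · simp [h]
    · linarith
  have hRHSf : (0:ℝ) ≤ (1 + mb) ^ (s + α) * (1 + c) ^ (s - α) :=
    mul_nonneg (Real.rpow_nonneg (by linarith) _) (Real.rpow_nonneg (by linarith) _)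
  rcases hc with hc0 | hc1
  · subst hc0
    rw [mul_zero]
    nlinarith
  have hc0 : 0 < c := lt_of_lt_of_le one_pos hc1
  set D : ℝ := max a c with hD
  have hD1 : 1 ≤ D := le_trans ha (le_max_left _ _)
  have hD0 : 0 < D := lt_of_lt_of_le one_pos hD1
  have habs := abs_le.mp hm
  -- Step 1
  have step1 : |a ^ s - c ^ s| ≤ s * mb * D ^ (s - 1) := by
    rcases le_total c a with h | h
    · have h1 : c ^ s ≤ a ^ s := Real.rpow_le_rpow hc0.le h (by linarith)
      rw [_root_.abs_of_nonneg (by linarith), hD, max_eq_left h]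
      have h2 := rpow_sub_rpow_le hc0 h hs
      have hx : a - c ≤ mb := le_trans (le_abs_self _) hm
      have h3 : 0 ≤ a ^ (s-1) := Real.rpow_nonneg ha0.le _
      nlinarith [mul_nonneg (mul_nonneg (by linarith : (0:ℝ) ≤ s)
        (by linarith : (0:ℝ) ≤ mb - (a - c))) h3]
    · have h1 : a ^ s ≤ c ^ s := Real.rpow_le_rpow ha0.le h (by linarith)
      rw [_root_.abs_of_nonpos (by linarith), hD, max_eq_right h]
      have h2 := rpow_sub_rpow_le ha0 h hs
      have hx : c - a ≤ mb := by linarith [habs.1]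
      have h3 : 0 ≤ c ^ (s-1) := Real.rpow_nonneg hc0.le _
      nlinarith [mul_nonneg (mul_nonneg (by linarith : (0:ℝ) ≤ s)
        (by linarith : (0:ℝ) ≤ mb - (c - a))) h3]
  -- Step 2
  have hDam : D ≤ a * (1 + mb) := by
    rw [hD, max_le_iff]
    exact ⟨by nlinarith, by nlinarith [habs.1]⟩
  have hDcm : D ≤ (1 + c) * (1 + mb) := by
    rw [hD, max_le_iff]
    exact ⟨by nlinarith [habs.2], by nlinarith⟩
  -- Step 3
  have step3 : D ^ (s - 1) * a ^ (-α) ≤ D ^ (s - 1 - α) * (1 + mb) ^ α := by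
    have h1 : D ^ (s-1) = D ^ (s-1-α) * D ^ α := by
      rw [← Real.rpow_add hD0]; ring_nf
    have h2 : D ^ α ≤ (a * (1 + mb)) ^ α := Real.rpow_le_rpow hD0.le hDam hα0
    have h3 : (a * (1 + mb)) ^ α = a ^ α * (1 + mb) ^ α := Real.mul_rpow ha0.le (by linarith)
    have h4 : a ^ α * a ^ (-α) = 1 := by
      rw [← Real.rpow_add ha0]; simp
    have h5 : 0 ≤ a ^ (-α) := Real.rpow_nonneg ha0.le _
    calc D ^ (s-1) * a ^ (-α) = D ^ (s-1-α) * (D ^ α * a ^ (-α)) := by rw [h1]; ring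
      _ ≤ D ^ (s-1-α) * ((a ^ α * (1 + mb) ^ α) * a ^ (-α)) := by
          apply mul_le_mul_of_nonneg_left _ (Real.rpow_nonneg hD0.le _)
          rw [← h3]
          exact mul_le_mul_of_nonneg_right h2 h5
      _ = D ^ (s-1-α) * (1 + mb) ^ α * (a ^ α * a ^ (-α)) := by ring
      _ = D ^ (s-1-α) * (1 + mb) ^ α := by rw [h4, mul_one]
  -- Step 4
  have one_le_pow_mb : (1:ℝ) ≤ (1+mb) ^ (s-1) := by
    calc (1:ℝ) = (1+mb) ^ (0:ℝ) := by rw [Real.rpow_zero]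
      _ ≤ (1+mb) ^ (s-1) := Real.rpow_le_rpow_of_exponent_le (by linarith) (by linarith)
  have step4 : c * D ^ (s - 1 - α) ≤ (1 + mb) ^ (s - 1) * (1 + c) ^ (s - α) := by
    rcases le_total α (s - 1) with hcase | hcase
    · have h1 : D ^ (s-1-α) ≤ ((1+c)*(1+mb)) ^ (s-1-α) :=
        Real.rpow_le_rpow hD0.le hDcm (by linarith)
      have h2 : ((1+c)*(1+mb)) ^ (s-1-α) = (1+c)^(s-1-α) * (1+mb)^(s-1-α) :=
        Real.mul_rpow (by linarith) (by linarith)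
      have h3 : (1+mb) ^ (s-1-α) ≤ (1+mb) ^ (s-1) :=
        Real.rpow_le_rpow_of_exponent_le (by linarith) (by linarith)
      have h4 : c * (1+c) ^ (s-1-α) ≤ (1+c) ^ (s-α) := by
        have h5 : c * (1+c)^(s-1-α) ≤ (1+c) * (1+c)^(s-1-α) :=
          mul_le_mul_of_nonneg_right (by linarith) (Real.rpow_nonneg (by linarith) _)
        have h6 : (1+c) * (1+c)^(s-1-α) = (1+c)^(s-α) := by
          have h7 := Real.rpow_add (show (0:ℝ) < 1+c by linarith) 1 (s-1-α)
          rw [Real.rpow_one] at h7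
          rw [← h7]
          congr 1
          ring
        linarith [h5, h6.le, h6.ge]
      calc c * D ^ (s-1-α) ≤ c * ((1+c)^(s-1-α) * (1+mb)^(s-1-α)) := by
            rw [← h2]; exact mul_le_mul_of_nonneg_left h1 hc0.le
        _ = (c * (1+c)^(s-1-α)) * (1+mb)^(s-1-α) := by ring
        _ ≤ (1+c)^(s-α) * (1+mb)^(s-1) :=
            mul_le_mul h4 h3 (Real.rpow_nonneg (by linarith) _)
              (Real.rpow_nonneg (by linarith) _)
        _ = (1+mb)^(s-1) * (1+c)^(s-α) := by ring
    · have hcD : c ≤ D := le_max_right _ _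
      have h1 : D ^ (s-1-α) ≤ c ^ (s-1-α) :=
        Real.rpow_le_rpow_of_nonpos hc0 hcD (by linarith)
      have h2 : c * c ^ (s-1-α) = c ^ (s-α) := by
        have h7 := Real.rpow_add hc0 1 (s-1-α)
        rw [Real.rpow_one] at h7
        rw [← h7]
        congr 1
        ring
      have h3 : c ^ (s-α) ≤ (1+c) ^ (s-α) :=
        Real.rpow_le_rpow hc0.le (by linarith) (by linarith)
      calc c * D ^ (s-1-α) ≤ c * c ^ (s-1-α) := mul_le_mul_of_nonneg_left h1 hc0.le
        _ = c ^ (s-α) := h2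
        _ ≤ (1+c) ^ (s-α) := h3
        _ ≤ (1+mb)^(s-1) * (1+c)^(s-α) := by
            nlinarith [Real.rpow_nonneg (show (0:ℝ) ≤ 1+c by linarith) (s-α)]
  -- Combine
  have hanegnn : 0 ≤ a ^ (-α) := Real.rpow_nonneg ha0.le _
  have hpowα : 0 ≤ (1+mb) ^ α := Real.rpow_nonneg (by linarith) _
  have hpows1 : 0 ≤ (1+mb) ^ (s-1) := Real.rpow_nonneg (by linarith) _
  have hDpow : 0 ≤ D ^ (s-1-α) := Real.rpow_nonneg hD0.le _
  have comb : a ^ (-α) * |a ^ s - c ^ s| * c ≤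
      s * mb * (1+mb)^α * ((1+mb)^(s-1) * (1+c)^(s-α)) := by
    calc a ^ (-α) * |a ^ s - c ^ s| * c
        ≤ a ^ (-α) * (s * mb * D ^ (s-1)) * c := by
          apply mul_le_mul_of_nonneg_right _ hcnn
          exact mul_le_mul_of_nonneg_left step1 hanegnn
      _ = (s * mb) * (c * (D ^ (s-1) * a ^ (-α))) := by ring
      _ ≤ (s * mb) * (c * (D ^ (s-1-α) * (1+mb)^α)) := by
          apply mul_le_mul_of_nonneg_left _ (by nlinarith : (0:ℝ) ≤ s * mb)
          exact mul_le_mul_of_nonneg_left step3 hcnn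
      _ = (s * mb * (1+mb)^α) * (c * D ^ (s-1-α)) := by ring
      _ ≤ (s * mb * (1+mb)^α) * ((1+mb)^(s-1) * (1+c)^(s-α)) := by
          apply mul_le_mul_of_nonneg_left step4
          apply mul_nonneg (by nlinarith : (0:ℝ) ≤ s * mb) hpowα
  have final : s * mb * (1+mb)^α * ((1+mb)^(s-1) * (1+c)^(s-α)) ≤
      s * ((1 + mb) ^ (s + α) * (1 + c) ^ (s - α)) := by
    have h1 : mb * (1+mb)^α * (1+mb)^(s-1) ≤ (1+mb)^(s+α) := by
      have h2 : mb * (1+mb)^α * (1+mb)^(s-1) ≤ (1+mb) * (1+mb)^α * (1+mb)^(s-1) := by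
        apply mul_le_mul_of_nonneg_right _ hpows1
        exact mul_le_mul_of_nonneg_right (by linarith) hpowα
      have h3 : (1+mb) * (1+mb)^α * (1+mb)^(s-1) = (1+mb)^(s+α) := by
        have e1 := Real.rpow_add (show (0:ℝ) < 1+mb by linarith) 1 α
        rw [Real.rpow_one] at e1
        have e2 := Real.rpow_add (show (0:ℝ) < 1+mb by linarith) (1+α) (s-1)
        rw [← e1, ← e2]
        congr 1
        ring
      linarith [h2, h3.le]
    have hcpow : 0 ≤ (1+c) ^ (s-α) := Real.rpow_nonneg (by linarith) _
    calc s * mb * (1+mb)^α * ((1+mb)^(s-1) * (1+c)^(s-α))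
        = s * ((mb * (1+mb)^α * (1+mb)^(s-1)) * (1+c)^(s-α)) := by ring
      _ ≤ s * ((1+mb)^(s+α) * (1+c)^(s-α)) := by
          apply mul_le_mul_of_nonneg_left _ (by linarith : (0:ℝ) ≤ s)
          exact mul_le_mul_of_nonneg_right h1 hcpow
  linarith

end RealIneq
section SummabilityC

open Real

lemma summable_int_weight {p : ℝ} (hp : 1 < p) :
    Summable (fun k : ℤ => (1 + |(k:ℝ)|) ^ (-p)) := by
  have h1 : Summable (fun k : ℤ => |(k:ℝ)| ^ (-p)) := summable_abs_int_rpow hp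
  have h2 : Summable (fun k : ℤ => if k = 0 then (1:ℝ) else 0) := by
    apply summable_of_ne_finset_zero (s := {0})
    intro k hk
    simp only [Finset.mem_singleton] at hk
    simp [hk]
  refine Summable.of_nonneg_of_le (fun k => Real.rpow_nonneg (by positivity) _)
    (fun k => ?_) (h2.add h1)
  by_cases hk : k = 0
  · subst hk
    simp [Real.zero_rpow (by linarith : -p ≠ 0)]
  · have hk0 : (0:ℝ) < |(k:ℝ)| := by
      simp only [abs_pos]
      exact_mod_cast hk
    have := Real.rpow_le_rpow_of_nonpos hk0 (by linarith : |(k:ℝ)| ≤ 1 + |(k:ℝ)|)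
      (by linarith : -p ≤ 0)
    simp only [hk, if_false, zero_add]
    exact this

/-- Explicit equivalence `Z3 ≃ ℤ × ℤ × ℤ`. -/
def z3Equiv : Z3 ≃ ℤ × ℤ × ℤ where
  toFun m := (m 0, m 1, m 2)
  invFun p := ![p.1, p.2.1, p.2.2]
  left_inv m := by
    funext i
    fin_cases i <;> simp [Matrix.cons_val_zero, Matrix.cons_val_one]
  right_inv p := rfl

set_option maxHeartbeats 2000000 in
lemma summable_prod_weight {p : ℝ} (hp : 1 < p) :
    Summable (fun m : Z3 => ∏ i : Fin 3, (1 + |(m i : ℝ)|) ^ (-p)) := by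
  have h := summable_int_weight hp
  have h12 : Summable (fun q : ℤ × ℤ => (1 + |(q.1:ℝ)|) ^ (-p) * (1 + |(q.2:ℝ)|) ^ (-p)) :=
    h.mul_of_nonneg h (fun k => Real.rpow_nonneg (by positivity) _)
      (fun k => Real.rpow_nonneg (by positivity) _)
  have h123 : Summable (fun q : ℤ × ℤ × ℤ =>
      (1 + |(q.1:ℝ)|) ^ (-p) * ((1 + |(q.2.1:ℝ)|) ^ (-p) * (1 + |(q.2.2:ℝ)|) ^ (-p))) :=
    h.mul_of_nonneg h12 (fun k => Real.rpow_nonneg (by positivity) _)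
      (fun q => mul_nonneg (Real.rpow_nonneg (by positivity) _) (Real.rpow_nonneg (by positivity) _))
  have := (z3Equiv.summable_iff (f := fun q : ℤ × ℤ × ℤ =>
      (1 + |(q.1:ℝ)|) ^ (-p) * ((1 + |(q.2.1:ℝ)|) ^ (-p) * (1 + |(q.2.2:ℝ)|) ^ (-p)))).mpr h123
  apply this.congr
  intro m
  rw [Fin.prod_univ_three]
  simp only [z3Equiv, Equiv.coe_fn_mk, Function.comp_apply]
  show (1 + |((m 0 : ℤ) : ℝ)|) ^ (-p) * ((1 + |((m 1 : ℤ) : ℝ)|) ^ (-p) *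
    (1 + |((m 2 : ℤ) : ℝ)|) ^ (-p)) = _
  ring

lemma summable_knorm_weight {r : ℝ} (hr : 3 < r) :
    Summable (fun m : Z3 => (1 + knorm m) ^ (-r)) := by
  have hp : 1 < r / 3 := by linarith
  refine Summable.of_nonneg_of_le
    (fun m => Real.rpow_nonneg (by linarith [knorm_nonneg m]) _)
    (fun m => ?_) (summable_prod_weight hp)
  have hkn := knorm_nonneg m
  have hprod_le : ∏ i : Fin 3, (1 + |(m i : ℝ)|) ≤ (1 + knorm m) ^ (3:ℕ) := by
    have : ∀ i : Fin 3, (1 + |(m i : ℝ)|) ≤ 1 + knorm m := fun i => by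
      linarith [abs_coord_le_knorm m i]
    calc ∏ i : Fin 3, (1 + |(m i : ℝ)|) ≤ ∏ i : Fin 3, (1 + knorm m) :=
          Finset.prod_le_prod (fun i _ => by positivity) (fun i _ => this i)
      _ = (1 + knorm m) ^ (3:ℕ) := by
          rw [Finset.prod_const]
          norm_num
  have hprodpos : (0:ℝ) < ∏ i : Fin 3, (1 + |(m i : ℝ)|) :=
    Finset.prod_pos (fun i _ => by positivity)
  have key : (1 + knorm m) ^ (-r) ≤ (∏ i : Fin 3, (1 + |(m i : ℝ)|)) ^ (-(r/3)) := by
    have h1 : (1 + knorm m) ^ (-r) = ((1 + knorm m) ^ (3:ℕ)) ^ (-(r/3)) := by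
      rw [← Real.rpow_natCast (1 + knorm m) 3, ← Real.rpow_mul (by linarith)]
      congr 1
      push_cast
      ring
    rw [h1]
    exact Real.rpow_le_rpow_of_nonpos hprodpos hprod_le (by linarith)
  have split : (∏ i : Fin 3, (1 + |(m i : ℝ)|)) ^ (-(r/3)) =
      ∏ i : Fin 3, (1 + |(m i : ℝ)|) ^ (-(r/3)) :=
    (Real.finset_prod_rpow _ _ (fun i _ => by positivity) _).symm
  rw [split] at key
  exact key

end SummabilityC
section RapidDecayLemmas

open Real

lemma one_le_one_add_knorm (m : Z3) : (1:ℝ) ≤ 1 + knorm m := by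
  linarith [knorm_nonneg m]

lemma rd_bound {c : Z3 → ℂ} (hc : RapidDecay c) (t : ℝ) :
    ∃ C : ℝ, 0 ≤ C ∧ ∀ q : Z3, ‖c q‖ * (1 + knorm q) ^ t ≤ C := by
  obtain ⟨N, hN⟩ := exists_nat_ge t
  obtain ⟨C, hC⟩ := hc N
  refine ⟨max C 0, le_max_right _ _, fun q => ?_⟩
  have h1 : (1 + knorm q) ^ t ≤ (1 + knorm q) ^ (N:ℝ) :=
    Real.rpow_le_rpow_of_exponent_le (one_le_one_add_knorm q) hN
  have h2 : (1 + knorm q) ^ (N:ℝ) = (1 + knorm q) ^ N := Real.rpow_natCast _ N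
  calc ‖c q‖ * (1 + knorm q) ^ t ≤ ‖c q‖ * (1 + knorm q) ^ (N:ℝ) :=
        mul_le_mul_of_nonneg_left h1 (norm_nonneg _)
    _ = ‖c q‖ * (1 + knorm q) ^ N := by rw [h2]
    _ ≤ C := hC q
    _ ≤ max C 0 := le_max_left _ _

lemma rd_summable {c : Z3 → ℂ} (hc : RapidDecay c) (t : ℝ) :
    Summable (fun m : Z3 => ‖c m‖ * (1 + knorm m) ^ t) := by
  obtain ⟨C, hC0, hC⟩ := rd_bound hc (t + 4)
  have hsum : Summable (fun m : Z3 => C * (1 + knorm m) ^ (-(4:ℝ))) :=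
    (summable_knorm_weight (by norm_num : (3:ℝ) < 4)).mul_left C
  refine Summable.of_nonneg_of_le
    (fun m => mul_nonneg (norm_nonneg _) (Real.rpow_nonneg (by linarith [knorm_nonneg m]) _))
    (fun m => ?_) hsum
  have hk : (0:ℝ) < 1 + knorm m := by linarith [knorm_nonneg m]
  have h1 : (1 + knorm m) ^ t = (1 + knorm m) ^ (t + 4) * (1 + knorm m) ^ (-(4:ℝ)) := by
    rw [← Real.rpow_add hk]; ring_nf
  rw [h1, ← mul_assoc]
  exact mul_le_mul_of_nonneg_right (hC m) (Real.rpow_nonneg hk.le _)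

lemma rd_summable_norm {c : Z3 → ℂ} (hc : RapidDecay c) : Summable (fun m : Z3 => ‖c m‖) := by
  have := rd_summable hc 0
  simpa [Real.rpow_zero] using this

lemma summable_of_norm_le_rd {f : Z3 → ℂ} {c : Z3 → ℂ} (hc : RapidDecay c) (K : ℝ)
    (h : ∀ m, ‖f m‖ ≤ ‖c m‖ * K) : Summable f := by
  apply Summable.of_norm
  exact Summable.of_nonneg_of_le (fun m => norm_nonneg _) h ((rd_summable_norm hc).mul_right K)

lemma norm_pd_le (j : Fin 3) (c : Z3 → ℂ) (q : Z3) : ‖pd j c q‖ ≤ knorm q * ‖c q‖ := by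
  unfold pd
  rw [norm_mul, norm_mul, Complex.norm_I, one_mul, Complex.norm_real, Real.norm_eq_abs]
  apply mul_le_mul_of_nonneg_right _ (norm_nonneg _)
  have h1 : |2 * Real.pi * ((q j : ℤ) : ℝ)| = 2 * Real.pi * |((q j : ℤ) : ℝ)| := by
    rw [abs_mul, abs_of_pos (by positivity : (0:ℝ) < 2 * Real.pi)]
  rw [h1]
  exact coord_le_knorm q j

lemma norm_lam (t : ℝ) (c : Z3 → ℂ) (q : Z3) : ‖lam t c q‖ = knorm q ^ t * ‖c q‖ := by
  unfold lam
  rw [norm_mul, Complex.norm_real, Real.norm_eq_abs,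
    _root_.abs_of_nonneg (Real.rpow_nonneg (knorm_nonneg q) t)]

lemma knorm_rpow_le (t : ℝ) (ht : 0 ≤ t) (q : Z3) : knorm q ^ t ≤ (1 + knorm q) ^ t :=
  Real.rpow_le_rpow (knorm_nonneg q) (by linarith) ht

end RapidDecayLemmas
section Representation

open Real

/-- The single-sum representation of the commutator coefficients. -/
def hh (s : ℝ) (b : Fin 3 → Z3 → ℂ) (V : Z3 → ℂ) (n m : Z3) : ℂ :=
  ∑ j : Fin 3, b j m * Complex.I * ((2 * Real.pi * (((n - m) j : ℤ) : ℝ) : ℝ) : ℂ) * V (n - m) *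
    ((knorm n ^ s - knorm (n - m) ^ s : ℝ) : ℂ)

lemma summable_bV_pd {bj V : Z3 → ℂ} (hbj : RapidDecay bj) (hV : RapidDecay V) (j : Fin 3)
    (n : Z3) : Summable (fun m : Z3 => bj m * pd j V (n - m)) := by
  obtain ⟨C, hC0, hC⟩ := rd_bound hV 1
  apply summable_of_norm_le_rd hbj C
  intro m
  rw [norm_mul]
  apply mul_le_mul_of_nonneg_left _ (norm_nonneg _)
  calc ‖pd j V (n - m)‖ ≤ knorm (n - m) * ‖V (n - m)‖ := norm_pd_le j V (n - m)
    _ ≤ (1 + knorm (n - m)) * ‖V (n - m)‖ := by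
        apply mul_le_mul_of_nonneg_right (by linarith) (norm_nonneg _)
    _ = ‖V (n - m)‖ * (1 + knorm (n - m)) ^ (1:ℝ) := by rw [Real.rpow_one]; ring
    _ ≤ C := hC (n - m)

lemma summable_bV_pd_lam {bj V : Z3 → ℂ} (hbj : RapidDecay bj) (hV : RapidDecay V)
    (s : ℝ) (hs : 0 ≤ s) (j : Fin 3) (n : Z3) :
    Summable (fun m : Z3 => bj m * pd j (lam s V) (n - m)) := by
  obtain ⟨C, hC0, hC⟩ := rd_bound hV (1 + s)
  apply summable_of_norm_le_rd hbj C
  intro m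
  rw [norm_mul]
  apply mul_le_mul_of_nonneg_left _ (norm_nonneg _)
  set q := n - m
  have hq0 : (0:ℝ) ≤ 1 + knorm q := by linarith [knorm_nonneg q]
  calc ‖pd j (lam s V) q‖ ≤ knorm q * ‖lam s V q‖ := norm_pd_le j (lam s V) q
    _ = knorm q * (knorm q ^ s * ‖V q‖) := by rw [norm_lam]
    _ ≤ (1 + knorm q) * ((1 + knorm q) ^ s * ‖V q‖) := by
        apply mul_le_mul (by linarith [knorm_nonneg q])
          (mul_le_mul_of_nonneg_right (knorm_rpow_le s hs q) (norm_nonneg _))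
          (mul_nonneg (Real.rpow_nonneg (knorm_nonneg q) _) (norm_nonneg _)) hq0
    _ = ‖V q‖ * ((1 + knorm q) ^ (1:ℝ) * (1 + knorm q) ^ s) := by rw [Real.rpow_one]; ring
    _ = ‖V q‖ * (1 + knorm q) ^ (1 + s) := by rw [← Real.rpow_add (by linarith [knorm_nonneg q])]
    _ ≤ C := hC q

lemma commLam_rep (s : ℝ) (hs : 0 ≤ s) (b : Fin 3 → Z3 → ℂ) (V : Z3 → ℂ)
    (hb : SmoothV3 b) (hV : SmoothFun V) (n : Z3) :
    commLam s b V n = ∑' m : Z3, hh s b V n m := by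
  have hbd : ∀ j, RapidDecay (b j) := fun j => (hb j).2
  have hVd : RapidDecay V := hV.2
  set KS : ℂ := ((knorm n ^ s : ℝ) : ℂ) with hKS
  have h1 : ∀ j : Fin 3, Summable (fun m : Z3 => KS * (b j m * pd j V (n - m))) :=
    fun j => (summable_bV_pd (hbd j) hVd j n).mul_left KS
  have h2 : ∀ j : Fin 3, Summable (fun m : Z3 => b j m * pd j (lam s V) (n - m)) :=
    fun j => summable_bV_pd_lam (hbd j) hVd s hs j n
  have step1 : commLam s b V n =
      ∑ j : Fin 3, (KS * conv (b j) (pd j V) n - conv (b j) (pd j (lam s V)) n) := by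
    simp only [commLam, Pi.sub_apply, lam, transport, hKS]
    rw [Finset.mul_sum, ← Finset.sum_sub_distrib]
  have step2 : ∀ j : Fin 3, KS * conv (b j) (pd j V) n - conv (b j) (pd j (lam s V)) n =
      ∑' m : Z3, (KS * (b j m * pd j V (n - m)) - b j m * pd j (lam s V) (n - m)) := by
    intro j
    rw [Summable.tsum_sub (h1 j) (h2 j)]
    congr 1
    unfold conv
    exact (tsum_mul_left).symm
  rw [step1, Finset.sum_congr rfl (fun j _ => step2 j)]
  rw [← Summable.tsum_finsetSum (fun j _ => (h1 j).sub (h2 j))]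
  apply tsum_congr
  intro m
  unfold hh
  apply Finset.sum_congr rfl
  intro j _
  simp only [pd, lam, Complex.ofReal_sub]
  ring

lemma hh_zero_of_divfree {s : ℝ} {b : Fin 3 → Z3 → ℂ} {V : Z3 → ℂ}
    (hdiv : DivFree b) (m : Z3) : hh s b V 0 m = 0 := by
  unfold hh
  have key : ∑ j : Fin 3, ((((0 - m : Z3) j : ℤ) : ℂ)) * b j m = 0 := by
    have h := hdiv m
    have : ∀ j : Fin 3, ((((0 - m : Z3) j : ℤ) : ℂ)) * b j m = -(((m j : ℤ) : ℂ) * b j m) := by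
      intro j
      have : (0 - m : Z3) j = -(m j) := by simp
      rw [this]
      push_cast
      ring
    rw [Finset.sum_congr rfl (fun j _ => this j), Finset.sum_neg_distrib, h, neg_zero]
  have expand : ∀ j : Fin 3,
      b j m * Complex.I * ((2 * Real.pi * (((0 - m : Z3) j : ℤ) : ℝ) : ℝ) : ℂ) * V (0 - m) *
        ((knorm 0 ^ s - knorm (0 - m) ^ s : ℝ) : ℂ) =
      (Complex.I * ((2 * Real.pi : ℝ) : ℂ) * V (0 - m) *
        ((knorm 0 ^ s - knorm (0 - m) ^ s : ℝ) : ℂ)) * (((((0 - m : Z3) j : ℤ) : ℂ)) * b j m) := by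
    intro j
    push_cast
    ring
  rw [Finset.sum_congr rfl (fun j _ => expand j), ← Finset.mul_sum, key, mul_zero]

end Representation
section PointwiseBound

open Real

lemma knorm_diff_le (n m : Z3) : |knorm n - knorm (n - m)| ≤ knorm m := by
  have h1 : knorm n ≤ knorm m + knorm (n - m) := by
    have e : m + (n - m) = n := by ring
    calc knorm n = knorm (m + (n - m)) := by rw [e]
      _ ≤ knorm m + knorm (n - m) := knorm_triangle _ _
  have h2 : knorm (n - m) ≤ knorm n + knorm m := by
    have e : n + (-m) = n - m := by ring
    calc knorm (n - m) = knorm (n + (-m)) := by rw [e]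
      _ ≤ knorm n + knorm (-m) := knorm_triangle _ _
      _ = knorm n + knorm m := by rw [knorm_neg]
  rw [abs_le]
  constructor <;> linarith

lemma hh_norm_le {s α : ℝ} (hs : 1 ≤ s) (hα0 : 0 ≤ α) (hαs : α ≤ s)
    (b : Fin 3 → Z3 → ℂ) (V : Z3 → ℂ) {n : Z3} (hn : n ≠ 0) (m : Z3) :
    knorm n ^ (-α) * ‖hh s b V n m‖ ≤
      s * ((∑ j : Fin 3, ‖b j m‖) * (1 + knorm m) ^ (s + α) *
        (‖V (n - m)‖ * (1 + knorm (n - m)) ^ (s - α))) := by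
  set q : Z3 := n - m with hq
  set Δ : ℝ := knorm n ^ s - knorm q ^ s with hΔ
  have hcnn := knorm_nonneg q
  have hknn := knorm_nonneg n
  have hmnn := knorm_nonneg m
  have hc : knorm q = 0 ∨ 1 ≤ knorm q := by
    by_cases hq0 : q = 0
    · left; rw [hq0, knorm_zero]
    · right; exact one_le_knorm hq0
  have key : knorm n ^ (-α) * |Δ| * knorm q ≤
      s * ((1 + knorm m) ^ (s + α) * (1 + knorm q) ^ (s - α)) :=
    multiplier_est hs hα0 hαs (one_le_knorm hn) hc (knorm_diff_le n m)
  -- norm of each term in hh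
  have hterm : ∀ j : Fin 3,
      ‖b j m * Complex.I * ((2 * Real.pi * ((q j : ℤ) : ℝ) : ℝ) : ℂ) * V q * ((Δ : ℝ) : ℂ)‖
        ≤ ‖b j m‖ * (knorm q * ‖V q‖ * |Δ|) := by
    intro j
    have heq : ‖b j m * Complex.I * ((2 * Real.pi * ((q j : ℤ) : ℝ) : ℝ) : ℂ) * V q *
        ((Δ : ℝ) : ℂ)‖ = ‖b j m‖ * (2 * Real.pi * |((q j : ℤ) : ℝ)|) * ‖V q‖ * |Δ| := by
      simp only [norm_mul, Complex.norm_I, Complex.norm_real, Real.norm_eq_abs, mul_one,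
        abs_mul, abs_two, _root_.abs_of_pos Real.pi_pos]
    rw [heq]
    have h2 := coord_le_knorm q j
    have habs : (0:ℝ) ≤ |Δ| := abs_nonneg _
    nlinarith [norm_nonneg (b j m), norm_nonneg (V q),
      mul_nonneg (norm_nonneg (b j m)) (mul_nonneg (norm_nonneg (V q)) habs),
      mul_nonneg (mul_nonneg (norm_nonneg (b j m)) (norm_nonneg (V q))) habs]
  have hsum : ‖hh s b V n m‖ ≤ ∑ j : Fin 3, ‖b j m‖ * (knorm q * ‖V q‖ * |Δ|) := by
    unfold hh
    refine le_trans (norm_sum_le _ _) (Finset.sum_le_sum (fun j _ => ?_))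
    exact hterm j
  have hka : 0 ≤ knorm n ^ (-α) := Real.rpow_nonneg hknn _
  calc knorm n ^ (-α) * ‖hh s b V n m‖
      ≤ knorm n ^ (-α) * ∑ j : Fin 3, ‖b j m‖ * (knorm q * ‖V q‖ * |Δ|) :=
        mul_le_mul_of_nonneg_left hsum hka
    _ = ∑ j : Fin 3, ‖b j m‖ * ‖V q‖ * (knorm n ^ (-α) * |Δ| * knorm q) := by
        rw [Finset.mul_sum]
        exact Finset.sum_congr rfl (fun j _ => by ring)
    _ ≤ ∑ j : Fin 3, ‖b j m‖ * ‖V q‖ *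
          (s * ((1 + knorm m) ^ (s + α) * (1 + knorm q) ^ (s - α))) := by
        refine Finset.sum_le_sum (fun j _ => ?_)
        exact mul_le_mul_of_nonneg_left key
          (mul_nonneg (norm_nonneg _) (norm_nonneg _))
    _ = s * ((∑ j : Fin 3, ‖b j m‖) * (1 + knorm m) ^ (s + α) *
          (‖V q‖ * (1 + knorm q) ^ (s - α))) := by
        rw [← Finset.sum_mul, ← Finset.sum_mul]
        ring

end PointwiseBound
section L2Machinery

open Real

/-- Cauchy–Schwarz for tsums. -/
lemma tsum_mul_le_sqrt {ι : Type*} {f g : ι → ℝ}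
    (h2f : Summable (fun i => f i ^ 2)) (h2g : Summable (fun i => g i ^ 2)) :
    ∑' i, f i * g i ≤ Real.sqrt (∑' i, f i ^ 2) * Real.sqrt (∑' i, g i ^ 2) := by
  apply tsum_le_of_sum_le' (mul_nonneg (Real.sqrt_nonneg _) (Real.sqrt_nonneg _))
  intro S
  calc ∑ i ∈ S, f i * g i
      ≤ Real.sqrt (∑ i ∈ S, f i ^ 2) * Real.sqrt (∑ i ∈ S, g i ^ 2) :=
        Real.sum_mul_le_sqrt_mul_sqrt S f g
    _ ≤ Real.sqrt (∑' i, f i ^ 2) * Real.sqrt (∑' i, g i ^ 2) := by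
        apply mul_le_mul (Real.sqrt_le_sqrt (Summable.sum_le_tsum S (fun i _ => sq_nonneg _) h2f))
          (Real.sqrt_le_sqrt (Summable.sum_le_tsum S (fun i _ => sq_nonneg _) h2g))
          (Real.sqrt_nonneg _) (Real.sqrt_nonneg _)

lemma one_add_rpow_le {t r : ℝ} (ht : 0 ≤ t) (hr : 0 ≤ r) :
    (1 + t) ^ r ≤ 2 ^ r * (1 + t ^ r) := by
  have h2 : (0:ℝ) ≤ 2 ^ r := Real.rpow_nonneg (by norm_num) _
  rcases le_total t 1 with h | h
  · have h1 : (1 + t) ^ r ≤ 2 ^ r := Real.rpow_le_rpow (by linarith) (by linarith) hr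
    have h3 : (1:ℝ) ≤ 1 + t ^ r := by
      have := Real.rpow_nonneg ht r
      linarith
    nlinarith
  · have h1 : (1 + t) ^ r ≤ (2 * t) ^ r := Real.rpow_le_rpow (by linarith) (by linarith) hr
    have h2' : (2 * t) ^ r = 2 ^ r * t ^ r := Real.mul_rpow (by norm_num) (by linarith)
    have h3 : t ^ r ≤ 1 + t ^ r := by linarith
    have h4 : 2 ^ r * t ^ r ≤ 2 ^ r * (1 + t ^ r) := mul_le_mul_of_nonneg_left h3 h2
    linarith [h1, h2'.le, h2'.ge]

lemma sq_two_rpow (r : ℝ) : ((2:ℝ) ^ r) ^ 2 = 2 ^ (2 * r) := by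
  rw [sq, ← Real.rpow_add (by norm_num : (0:ℝ) < 2)]
  ring_nf

lemma sqrt_two_rpow (r : ℝ) : Real.sqrt ((2:ℝ) ^ (2 * r)) = 2 ^ r := by
  rw [← sq_two_rpow r, Real.sqrt_sq (Real.rpow_nonneg (by norm_num) _)]

lemma hnorm_sq_eq (σ : ℝ) (c : Z3 → ℂ) :
    (hnorm σ c) ^ 2 = ∑' n : Z3, (1 + knorm n ^ (2 * σ)) * ‖c n‖ ^ 2 := by
  unfold hnorm
  rw [Real.sq_sqrt]
  apply tsum_nonneg
  intro n
  apply mul_nonneg _ (sq_nonneg _)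
  have := Real.rpow_nonneg (knorm_nonneg n) (2 * σ)
  linarith

lemma hnormV3_sq_eq (σ : ℝ) (b : Fin 3 → Z3 → ℂ) :
    (hnormV3 σ b) ^ 2 = ∑ j : Fin 3, (hnorm σ (b j)) ^ 2 := by
  unfold hnormV3
  rw [Real.sq_sqrt (Finset.sum_nonneg (fun j _ => sq_nonneg _))]

lemma smooth_weight_summable {c : Z3 → ℂ} (hc : RapidDecay c) {σ : ℝ} (hσ : 0 ≤ σ) :
    Summable (fun m : Z3 => (1 + knorm m ^ (2 * σ)) * ‖c m‖ ^ 2) := by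
  obtain ⟨C, hC0, hC⟩ := rd_bound hc (2 * σ)
  refine Summable.of_nonneg_of_le (fun m => ?_) (fun m => ?_)
    ((rd_summable_norm hc).mul_left (2 * C))
  · apply mul_nonneg _ (sq_nonneg _)
    have := Real.rpow_nonneg (knorm_nonneg m) (2 * σ)
    linarith
  · have h1 : knorm m ^ (2 * σ) ≤ (1 + knorm m) ^ (2 * σ) :=
      knorm_rpow_le _ (by linarith) m
    have h2 : (1:ℝ) ≤ (1 + knorm m) ^ (2 * σ) := by
      calc (1:ℝ) = (1 + knorm m) ^ (0:ℝ) := by rw [Real.rpow_zero]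
        _ ≤ (1 + knorm m) ^ (2 * σ) :=
          Real.rpow_le_rpow_of_exponent_le (one_le_one_add_knorm m) (by linarith)
    have h3 : (1 + knorm m ^ (2 * σ)) * ‖c m‖ ^ 2 ≤
        2 * (1 + knorm m) ^ (2 * σ) * ‖c m‖ ^ 2 := by
      apply mul_le_mul_of_nonneg_right _ (sq_nonneg _)
      linarith
    have h4 : 2 * (1 + knorm m) ^ (2 * σ) * ‖c m‖ ^ 2 =
        2 * ((‖c m‖ * (1 + knorm m) ^ (2 * σ)) * ‖c m‖) := by ring
    have h5 : (‖c m‖ * (1 + knorm m) ^ (2 * σ)) * ‖c m‖ ≤ C * ‖c m‖ :=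
      mul_le_mul_of_nonneg_right (hC m) (norm_nonneg _)
    calc (1 + knorm m ^ (2 * σ)) * ‖c m‖ ^ 2 ≤ 2 * ((‖c m‖ * (1 + knorm m) ^ (2 * σ)) * ‖c m‖) := by
          rw [← h4]; exact h3
      _ ≤ 2 * (C * ‖c m‖) := by linarith
      _ = 2 * C * ‖c m‖ := by ring

end L2Machinery
/-- Let `s ≥ 1`, `0 ≤ α ≤ s` and `β > 3/2`. There is `C = C(s,α,β) > 0`
such that for every smooth divergence-free vector field `b` on `𝕋³` and every smooth
function `V` on `𝕋³`, `‖Λ^{−α} [Λ^s, b·∇] V‖_{L²} ≤ C ‖b‖_{H^{s+α+β}} ‖V‖_{H^{s−α}}`. -/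
theorem stmt2 (s α β : ℝ) (hs : 1 ≤ s) (hα0 : 0 ≤ α) (hαs : α ≤ s) (hβ : 3 / 2 < β) :
    ∃ C : ℝ, 0 < C ∧
      ∀ b : Fin 3 → Z3 → ℂ, SmoothV3 b → DivFree b →
        ∀ V : Z3 → ℂ, SmoothFun V →
          l2norm (lam (-α) (commLam s b V)) ≤ C * hnormV3 (s + α + β) b * hnorm (s - α) V := by
  have hs0 : (0:ℝ) < s := lt_of_lt_of_le one_pos hs
  have hβ3 : (3:ℝ) < 2 * β := by linarith
  have hKβsum : Summable (fun m : Z3 => (1 + knorm m) ^ (-(2*β))) := summable_knorm_weight hβ3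
  set Kβ := ∑' m : Z3, (1 + knorm m) ^ (-(2*β)) with hKβdef
  have hKβ1 : (1:ℝ) ≤ Kβ := by
    have h0 : (1:ℝ) = (1 + knorm (0:Z3)) ^ (-(2*β)) := by
      rw [knorm_zero]; norm_num
    calc (1:ℝ) = (1 + knorm (0:Z3)) ^ (-(2*β)) := h0
      _ ≤ Kβ := Summable.le_tsum hKβsum 0
          (fun j _ => Real.rpow_nonneg (by linarith [knorm_nonneg j]) _)
  have hKβpos : 0 < Real.sqrt Kβ := Real.sqrt_pos.mpr (by linarith)
  set σb := s + α + β with hσbdef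
  have hσb0 : (0:ℝ) ≤ σb := by rw [hσbdef]; linarith
  set C := s * Real.sqrt Kβ * Real.sqrt 3 * (2:ℝ) ^ σb * (2:ℝ) ^ (s - α) with hCdef
  have hCpos : 0 < C := by
    rw [hCdef]
    have h2 : (0:ℝ) < 2 := by norm_num
    exact mul_pos (mul_pos (mul_pos (mul_pos hs0 hKβpos)
      (Real.sqrt_pos.mpr (by norm_num))) (Real.rpow_pos_of_pos h2 σb))
      (Real.rpow_pos_of_pos h2 _)
  refine ⟨C, hCpos, ?_⟩
  intro b hb hdiv V hV
  -- basic objects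
  set u : Z3 → ℝ := fun m => (∑ j : Fin 3, ‖b j m‖) * (1 + knorm m) ^ (s + α) with hudef
  set v : Z3 → ℝ := fun q => ‖V q‖ * (1 + knorm q) ^ (s - α) with hvdef
  have hunn : ∀ m, 0 ≤ u m := fun m =>
    mul_nonneg (Finset.sum_nonneg (fun j _ => norm_nonneg _))
      (Real.rpow_nonneg (by linarith [knorm_nonneg m]) _)
  have hvnn : ∀ q, 0 ≤ v q := fun q =>
    mul_nonneg (norm_nonneg _) (Real.rpow_nonneg (by linarith [knorm_nonneg q]) _)
  have husum : Summable u := by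
    have h1 : ∀ j : Fin 3, Summable (fun m : Z3 => ‖b j m‖ * (1 + knorm m) ^ (s + α)) :=
      fun j => rd_summable (hb j).2 _
    have h2 : Summable (fun m : Z3 => ∑ j : Fin 3, ‖b j m‖ * (1 + knorm m) ^ (s + α)) :=
      summable_sum (fun j _ => h1 j)
    apply h2.congr
    intro m
    rw [← Finset.sum_mul]
  obtain ⟨Cv, hCv0, hCv⟩ := rd_bound hV.2 (s - α)
  have hCv' : ∀ q, v q ≤ Cv := fun q => hCv q
  have hvsum : Summable v := rd_summable hV.2 _
  have hv2sum : Summable (fun q : Z3 => v q ^ 2) := by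
    refine Summable.of_nonneg_of_le (fun q => sq_nonneg _) (fun q => ?_) (hvsum.mul_left Cv)
    calc v q ^ 2 = v q * v q := sq (v q) ▸ by ring
      _ ≤ Cv * v q := mul_le_mul_of_nonneg_right (hCv' q) (hvnn q)
  set Vsq := ∑' q : Z3, v q ^ 2 with hVsqdef
  have hVsqnn : 0 ≤ Vsq := tsum_nonneg (fun q => sq_nonneg _)
  have hwsum : ∀ n : Z3, Summable (fun m : Z3 => u m * v (n - m)) := by
    intro n
    refine Summable.of_nonneg_of_le (fun m => mul_nonneg (hunn m) (hvnn _))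
      (fun m => ?_) (husum.mul_right Cv)
    exact mul_le_mul_of_nonneg_left (hCv' _) (hunn m)
  set G := lam (-α) (commLam s b V) with hGdef
  -- pointwise bound
  have hpt : ∀ n : Z3, ‖G n‖ ≤ s * ∑' m : Z3, u m * v (n - m) := by
    intro n
    have hRHS0 : 0 ≤ s * ∑' m : Z3, u m * v (n - m) :=
      mul_nonneg hs0.le (tsum_nonneg (fun m => mul_nonneg (hunn m) (hvnn _)))
    by_cases hn : n = 0
    · subst hn
      have hc0 : commLam s b V 0 = 0 := by
        rw [commLam_rep s (by linarith) b V hb hV 0]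
        rw [tsum_congr (fun m => hh_zero_of_divfree hdiv m)]
        exact tsum_zero
      have : ‖G 0‖ = 0 := by
        rw [hGdef, norm_lam, hc0, norm_zero, mul_zero]
      rw [this]
      exact hRHS0
    · have hpos : 0 < knorm n ^ (-α) := Real.rpow_pos_of_pos (knorm_pos hn) _
      have hrep := commLam_rep s (by linarith) b V hb hV n
      have hhb : ∀ m : Z3, knorm n ^ (-α) * ‖hh s b V n m‖ ≤ s * (u m * v (n - m)) := by
        intro m
        have := hh_norm_le hs hα0 hαs b V hn m
        calc knorm n ^ (-α) * ‖hh s b V n m‖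
            ≤ s * ((∑ j : Fin 3, ‖b j m‖) * (1 + knorm m) ^ (s + α) *
              (‖V (n - m)‖ * (1 + knorm (n - m)) ^ (s - α))) := this
          _ = s * (u m * v (n - m)) := by rw [hudef, hvdef]
      have hsumhh : Summable (fun m : Z3 => ‖hh s b V n m‖) := by
        refine Summable.of_nonneg_of_le (fun m => norm_nonneg _) (fun m => ?_)
          (((hwsum n).mul_left s).mul_left (knorm n ^ (-α))⁻¹)
        have h1 := hhb m
        calc ‖hh s b V n m‖ = (knorm n ^ (-α))⁻¹ * (knorm n ^ (-α) * ‖hh s b V n m‖) := by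
              field_simp
          _ ≤ (knorm n ^ (-α))⁻¹ * (s * (u m * v (n - m))) :=
              mul_le_mul_of_nonneg_left h1 (inv_nonneg.mpr hpos.le)
      have hsum2 : Summable (fun m : Z3 => knorm n ^ (-α) * ‖hh s b V n m‖) :=
        hsumhh.mul_left _
      calc ‖G n‖ = knorm n ^ (-α) * ‖commLam s b V n‖ := by rw [hGdef, norm_lam]
        _ = knorm n ^ (-α) * ‖∑' m : Z3, hh s b V n m‖ := by rw [hrep]
        _ ≤ knorm n ^ (-α) * ∑' m : Z3, ‖hh s b V n m‖ :=
            mul_le_mul_of_nonneg_left (norm_tsum_le_tsum_norm hsumhh) hpos.le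
        _ = ∑' m : Z3, knorm n ^ (-α) * ‖hh s b V n m‖ := (tsum_mul_left).symm
        _ ≤ ∑' m : Z3, s * (u m * v (n - m)) :=
            Summable.tsum_le_tsum hhb hsum2 ((hwsum n).mul_left s)
        _ = s * ∑' m : Z3, u m * v (n - m) := tsum_mul_left
  set U := ∑' m : Z3, u m with hUdef
  have hUnn : 0 ≤ U := tsum_nonneg hunn
  -- the ℓ² bound over finite sets
  have hy_sum : ∀ n : Z3, Summable (fun m : Z3 => u m * v (n - m) ^ 2) := by
    intro n
    refine Summable.of_nonneg_of_le (fun m => mul_nonneg (hunn m) (sq_nonneg _))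
      (fun m => ?_) (((hwsum n).mul_left Cv))
    have h1 : v (n - m) ^ 2 ≤ Cv * v (n - m) := by
      calc v (n - m) ^ 2 = v (n - m) * v (n - m) := sq (v (n-m)) ▸ by ring
        _ ≤ Cv * v (n - m) := mul_le_mul_of_nonneg_right (hCv' _) (hvnn _)
    calc u m * v (n - m) ^ 2 ≤ u m * (Cv * v (n - m)) :=
          mul_le_mul_of_nonneg_left h1 (hunn m)
      _ = Cv * (u m * v (n - m)) := by ring
  have hw_le : ∀ n : Z3, ∑' m : Z3, u m * v (n - m) ≤
      Real.sqrt U * Real.sqrt (∑' m : Z3, u m * v (n - m) ^ 2) := by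
    intro n
    have hf2 : Summable (fun m : Z3 => Real.sqrt (u m) ^ 2) := by
      apply husum.congr
      intro m
      rw [Real.sq_sqrt (hunn m)]
    have hg2 : Summable (fun m : Z3 => (Real.sqrt (u m) * v (n - m)) ^ 2) := by
      apply (hy_sum n).congr
      intro m
      simp only [mul_pow, Real.sq_sqrt (hunn m)]
    have key := tsum_mul_le_sqrt hf2 hg2
    have e1 : ∑' m : Z3, Real.sqrt (u m) * (Real.sqrt (u m) * v (n - m)) =
        ∑' m : Z3, u m * v (n - m) := by
      apply tsum_congr
      intro m
      rw [← mul_assoc, Real.mul_self_sqrt (hunn m)]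
    have e2 : ∑' m : Z3, Real.sqrt (u m) ^ 2 = U := by
      apply tsum_congr
      intro m
      rw [Real.sq_sqrt (hunn m)]
    have e3 : ∑' m : Z3, (Real.sqrt (u m) * v (n - m)) ^ 2 =
        ∑' m : Z3, u m * v (n - m) ^ 2 := by
      apply tsum_congr
      intro m
      simp only [mul_pow, Real.sq_sqrt (hunn m)]
    calc ∑' m : Z3, u m * v (n - m)
        = ∑' m : Z3, Real.sqrt (u m) * (Real.sqrt (u m) * v (n - m)) := e1.symm
      _ ≤ Real.sqrt (∑' m : Z3, Real.sqrt (u m) ^ 2) *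
          Real.sqrt (∑' m : Z3, (Real.sqrt (u m) * v (n - m)) ^ 2) := key
      _ = Real.sqrt U * Real.sqrt (∑' m : Z3, u m * v (n - m) ^ 2) := by rw [e2, e3]
  have hS : ∀ S : Finset Z3, ∑ n ∈ S, ‖G n‖ ^ 2 ≤ s ^ 2 * U * (U * Vsq) := by
    intro S
    have hyS : ∑ n ∈ S, (∑' m : Z3, u m * v (n - m) ^ 2) ≤ U * Vsq := by
      have hswap : ∑ n ∈ S, (∑' m : Z3, u m * v (n - m) ^ 2) =
          ∑' m : Z3, (∑ n ∈ S, u m * v (n - m) ^ 2) :=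
        (Summable.tsum_finsetSum (fun n _ => hy_sum n)).symm
      rw [hswap]
      have hinner : ∀ m : Z3, ∑ n ∈ S, u m * v (n - m) ^ 2 ≤ u m * Vsq := by
        intro m
        rw [← Finset.mul_sum]
        apply mul_le_mul_of_nonneg_left _ (hunn m)
        have himg : ∑ n ∈ S, v (n - m) ^ 2 = ∑ q ∈ S.image (fun n => n - m), v q ^ 2 := by
          rw [Finset.sum_image]
          intro x _ y _ hxy
          exact sub_left_inj.mp hxy
        rw [himg]
        exact Summable.sum_le_tsum _ (fun q _ => sq_nonneg _) hv2sum
      have hLsum : Summable (fun m : Z3 => ∑ n ∈ S, u m * v (n - m) ^ 2) := by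
        refine Summable.of_nonneg_of_le
          (fun m => Finset.sum_nonneg (fun n _ => mul_nonneg (hunn m) (sq_nonneg _)))
          (fun m => hinner m) (husum.mul_right Vsq)
      calc ∑' m : Z3, (∑ n ∈ S, u m * v (n - m) ^ 2)
          ≤ ∑' m : Z3, u m * Vsq := Summable.tsum_le_tsum hinner hLsum (husum.mul_right Vsq)
        _ = U * Vsq := tsum_mul_right
    have hterm : ∀ n ∈ S, ‖G n‖ ^ 2 ≤ s ^ 2 * U * (∑' m : Z3, u m * v (n - m) ^ 2) := by
      intro n _
      have h1 : ‖G n‖ ^ 2 ≤ (s * ∑' m : Z3, u m * v (n - m)) ^ 2 :=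
        pow_le_pow_left₀ (norm_nonneg _) (hpt n) 2
      have h2 : (∑' m : Z3, u m * v (n - m)) ^ 2 ≤ U * (∑' m : Z3, u m * v (n - m) ^ 2) := by
        have h3 := hw_le n
        have h4 : 0 ≤ ∑' m : Z3, u m * v (n - m) :=
          tsum_nonneg (fun m => mul_nonneg (hunn m) (hvnn _))
        have h5 : (∑' m : Z3, u m * v (n - m)) ^ 2 ≤
            (Real.sqrt U * Real.sqrt (∑' m : Z3, u m * v (n - m) ^ 2)) ^ 2 :=
          pow_le_pow_left₀ h4 h3 2
        calc (∑' m : Z3, u m * v (n - m)) ^ 2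
            ≤ (Real.sqrt U * Real.sqrt (∑' m : Z3, u m * v (n - m) ^ 2)) ^ 2 := h5
          _ = U * (∑' m : Z3, u m * v (n - m) ^ 2) := by
              rw [mul_pow, Real.sq_sqrt hUnn,
                Real.sq_sqrt (tsum_nonneg (fun m => mul_nonneg (hunn m) (sq_nonneg _)))]
      calc ‖G n‖ ^ 2 ≤ (s * ∑' m : Z3, u m * v (n - m)) ^ 2 := h1
        _ = s ^ 2 * (∑' m : Z3, u m * v (n - m)) ^ 2 := by ring
        _ ≤ s ^ 2 * (U * (∑' m : Z3, u m * v (n - m) ^ 2)) :=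
            mul_le_mul_of_nonneg_left h2 (sq_nonneg s)
        _ = s ^ 2 * U * (∑' m : Z3, u m * v (n - m) ^ 2) := by ring
    calc ∑ n ∈ S, ‖G n‖ ^ 2
        ≤ ∑ n ∈ S, s ^ 2 * U * (∑' m : Z3, u m * v (n - m) ^ 2) :=
          Finset.sum_le_sum hterm
      _ = s ^ 2 * U * ∑ n ∈ S, (∑' m : Z3, u m * v (n - m) ^ 2) := by
          rw [Finset.mul_sum]
      _ ≤ s ^ 2 * U * (U * Vsq) :=
          mul_le_mul_of_nonneg_left hyS (mul_nonneg (sq_nonneg s) hUnn)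
  have hl2 : l2norm G ≤ s * U * Real.sqrt Vsq := by
    have h1 : l2sq G ≤ s ^ 2 * U * (U * Vsq) := by
      unfold l2sq
      apply tsum_le_of_sum_le'
        (mul_nonneg (mul_nonneg (sq_nonneg s) hUnn) (mul_nonneg hUnn hVsqnn)) hS
    have h2 : s ^ 2 * U * (U * Vsq) = (s * U) ^ 2 * Vsq := by ring
    calc l2norm G = Real.sqrt (l2sq G) := rfl
      _ ≤ Real.sqrt ((s * U) ^ 2 * Vsq) := Real.sqrt_le_sqrt (by rw [← h2]; exact h1)
      _ = s * U * Real.sqrt Vsq := by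
          rw [Real.sqrt_mul (sq_nonneg _), Real.sqrt_sq (mul_nonneg hs0.le hUnn)]
  -- bound U by the Sobolev norm of b
  have hbV3nn : 0 ≤ hnormV3 σb b := Real.sqrt_nonneg _
  have hU_le : U ≤ Real.sqrt Kβ * (Real.sqrt 3 * (2:ℝ) ^ σb * hnormV3 σb b) := by
    set f : Z3 → ℝ := fun m => (∑ j : Fin 3, ‖b j m‖) * (1 + knorm m) ^ σb with hfdef
    set g : Z3 → ℝ := fun m => (1 + knorm m) ^ (-β) with hgdef
    have hfg : ∀ m, u m = f m * g m := by
      intro m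
      rw [hudef, hfdef, hgdef]
      simp only []
      rw [mul_assoc, ← Real.rpow_add (by linarith [knorm_nonneg m] : (0:ℝ) < 1 + knorm m)]
      congr 2
      rw [hσbdef]
      ring
    have hsum_j : ∀ j : Fin 3, Summable (fun m : Z3 => ‖b j m‖ ^ 2 * (1 + knorm m) ^ (2 * σb)) := by
      intro j
      obtain ⟨Cb, hCb0, hCb⟩ := rd_bound (hb j).2 (2 * σb)
      refine Summable.of_nonneg_of_le
        (fun m => mul_nonneg (sq_nonneg _) (Real.rpow_nonneg (by linarith [knorm_nonneg m]) _))
        (fun m => ?_) ((rd_summable_norm (hb j).2).mul_left Cb)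
      calc ‖b j m‖ ^ 2 * (1 + knorm m) ^ (2 * σb)
          = (‖b j m‖ * (1 + knorm m) ^ (2 * σb)) * ‖b j m‖ := by ring
        _ ≤ Cb * ‖b j m‖ := mul_le_mul_of_nonneg_right (hCb m) (norm_nonneg _)
    have hf2sum : Summable (fun m : Z3 => f m ^ 2) := by
      refine Summable.of_nonneg_of_le (fun m => sq_nonneg _) (fun m => ?_)
        (((summable_sum (fun j (_ : j ∈ Finset.univ) => hsum_j j)).mul_left 3))
      rw [hfdef]
      simp only []
      have hcs : (∑ j : Fin 3, ‖b j m‖) ^ 2 ≤ 3 * ∑ j : Fin 3, ‖b j m‖ ^ 2 := by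
        have := Finset.sum_mul_sq_le_sq_mul_sq Finset.univ (fun j : Fin 3 => ‖b j m‖)
          (fun _ => (1:ℝ))
        simp only [mul_one, one_pow] at this
        calc (∑ j : Fin 3, ‖b j m‖) ^ 2 ≤ (∑ j : Fin 3, ‖b j m‖ ^ 2) * ∑ j : Fin 3, (1:ℝ) :=
              this
          _ = 3 * ∑ j : Fin 3, ‖b j m‖ ^ 2 := by
              simp [Finset.sum_const]
              ring
      have hwnn : (0:ℝ) ≤ (1 + knorm m) ^ (2 * σb) :=
        Real.rpow_nonneg (by linarith [knorm_nonneg m]) _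
      calc ((∑ j : Fin 3, ‖b j m‖) * (1 + knorm m) ^ σb) ^ 2
          = (∑ j : Fin 3, ‖b j m‖) ^ 2 * ((1 + knorm m) ^ σb) ^ 2 := by ring
        _ = (∑ j : Fin 3, ‖b j m‖) ^ 2 * (1 + knorm m) ^ (2 * σb) := by
            congr 1
            rw [sq, ← Real.rpow_add (by linarith [knorm_nonneg m] : (0:ℝ) < 1 + knorm m)]
            ring_nf
        _ ≤ (3 * ∑ j : Fin 3, ‖b j m‖ ^ 2) * (1 + knorm m) ^ (2 * σb) :=
            mul_le_mul_of_nonneg_right hcs hwnn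
        _ = 3 * ∑ j : Fin 3, ‖b j m‖ ^ 2 * (1 + knorm m) ^ (2 * σb) := by
            rw [← Finset.sum_mul]
            ring
    have hg2sum : Summable (fun m : Z3 => g m ^ 2) := by
      apply hKβsum.congr
      intro m
      rw [hgdef]
      simp only []
      rw [sq, ← Real.rpow_add (by linarith [knorm_nonneg m] : (0:ℝ) < 1 + knorm m)]
      ring_nf
    have hUfg : U = ∑' m : Z3, f m * g m := tsum_congr hfg
    have hkey := tsum_mul_le_sqrt hf2sum hg2sum
    have hg2eq : ∑' m : Z3, g m ^ 2 = Kβ := by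
      apply tsum_congr
      intro m
      rw [hgdef]
      simp only []
      rw [sq, ← Real.rpow_add (by linarith [knorm_nonneg m] : (0:ℝ) < 1 + knorm m)]
      ring_nf
    have hf2_le : ∑' m : Z3, f m ^ 2 ≤ 3 * ((2:ℝ) ^ (2 * σb) * (hnormV3 σb b) ^ 2) := by
      have hjle : ∀ j : Fin 3,
          ∑' m : Z3, ‖b j m‖ ^ 2 * (1 + knorm m) ^ (2 * σb) ≤
            (2:ℝ) ^ (2 * σb) * (hnorm σb (b j)) ^ 2 := by
        intro j
        have hptw : ∀ m : Z3, ‖b j m‖ ^ 2 * (1 + knorm m) ^ (2 * σb) ≤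
            (2:ℝ) ^ (2 * σb) * ((1 + knorm m ^ (2 * σb)) * ‖b j m‖ ^ 2) := by
          intro m
          have h1 := one_add_rpow_le (knorm_nonneg m) (by linarith : (0:ℝ) ≤ 2 * σb)
          calc ‖b j m‖ ^ 2 * (1 + knorm m) ^ (2 * σb)
              ≤ ‖b j m‖ ^ 2 * ((2:ℝ) ^ (2 * σb) * (1 + knorm m ^ (2 * σb))) :=
                mul_le_mul_of_nonneg_left h1 (sq_nonneg _)
            _ = (2:ℝ) ^ (2 * σb) * ((1 + knorm m ^ (2 * σb)) * ‖b j m‖ ^ 2) := by ring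
        have hr : Summable (fun m : Z3 =>
            (2:ℝ) ^ (2 * σb) * ((1 + knorm m ^ (2 * σb)) * ‖b j m‖ ^ 2)) :=
          (smooth_weight_summable (hb j).2 (by linarith : (0:ℝ) ≤ σb)).mul_left _
        calc ∑' m : Z3, ‖b j m‖ ^ 2 * (1 + knorm m) ^ (2 * σb)
            ≤ ∑' m : Z3, (2:ℝ) ^ (2 * σb) * ((1 + knorm m ^ (2 * σb)) * ‖b j m‖ ^ 2) :=
              Summable.tsum_le_tsum hptw (hsum_j j) hr
          _ = (2:ℝ) ^ (2 * σb) * ∑' m : Z3, (1 + knorm m ^ (2 * σb)) * ‖b j m‖ ^ 2 :=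
              tsum_mul_left
          _ = (2:ℝ) ^ (2 * σb) * (hnorm σb (b j)) ^ 2 := by rw [hnorm_sq_eq]
      have hsplit : ∑' m : Z3, f m ^ 2 ≤
          ∑' m : Z3, 3 * ∑ j : Fin 3, ‖b j m‖ ^ 2 * (1 + knorm m) ^ (2 * σb) := by
        apply Summable.tsum_le_tsum _ hf2sum ((summable_sum (fun j _ => hsum_j j)).mul_left 3)
        intro m
        rw [hfdef]
        simp only []
        have hcs : (∑ j : Fin 3, ‖b j m‖) ^ 2 ≤ 3 * ∑ j : Fin 3, ‖b j m‖ ^ 2 := by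
          have := Finset.sum_mul_sq_le_sq_mul_sq Finset.univ (fun j : Fin 3 => ‖b j m‖)
            (fun _ => (1:ℝ))
          simp only [mul_one, one_pow] at this
          calc (∑ j : Fin 3, ‖b j m‖) ^ 2 ≤ (∑ j : Fin 3, ‖b j m‖ ^ 2) * ∑ j : Fin 3, (1:ℝ) :=
                this
            _ = 3 * ∑ j : Fin 3, ‖b j m‖ ^ 2 := by
                simp [Finset.sum_const]
                ring
        have hwnn : (0:ℝ) ≤ (1 + knorm m) ^ (2 * σb) :=
          Real.rpow_nonneg (by linarith [knorm_nonneg m]) _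
        calc ((∑ j : Fin 3, ‖b j m‖) * (1 + knorm m) ^ σb) ^ 2
            = (∑ j : Fin 3, ‖b j m‖) ^ 2 * ((1 + knorm m) ^ σb) ^ 2 := by ring
          _ = (∑ j : Fin 3, ‖b j m‖) ^ 2 * (1 + knorm m) ^ (2 * σb) := by
              congr 1
              rw [sq, ← Real.rpow_add (by linarith [knorm_nonneg m] : (0:ℝ) < 1 + knorm m)]
              ring_nf
          _ ≤ (3 * ∑ j : Fin 3, ‖b j m‖ ^ 2) * (1 + knorm m) ^ (2 * σb) :=
              mul_le_mul_of_nonneg_right hcs hwnn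
          _ = 3 * ∑ j : Fin 3, ‖b j m‖ ^ 2 * (1 + knorm m) ^ (2 * σb) := by
              rw [← Finset.sum_mul]
              ring
      have hfin : ∑' m : Z3, 3 * ∑ j : Fin 3, ‖b j m‖ ^ 2 * (1 + knorm m) ^ (2 * σb) =
          3 * ∑ j : Fin 3, ∑' m : Z3, ‖b j m‖ ^ 2 * (1 + knorm m) ^ (2 * σb) := by
        rw [tsum_mul_left, Summable.tsum_finsetSum (fun j _ => hsum_j j)]
      calc ∑' m : Z3, f m ^ 2
          ≤ ∑' m : Z3, 3 * ∑ j : Fin 3, ‖b j m‖ ^ 2 * (1 + knorm m) ^ (2 * σb) := hsplit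
        _ = 3 * ∑ j : Fin 3, ∑' m : Z3, ‖b j m‖ ^ 2 * (1 + knorm m) ^ (2 * σb) := hfin
        _ ≤ 3 * ∑ j : Fin 3, (2:ℝ) ^ (2 * σb) * (hnorm σb (b j)) ^ 2 := by
            apply mul_le_mul_of_nonneg_left (Finset.sum_le_sum (fun j _ => hjle j))
              (by norm_num : (0:ℝ) ≤ 3)
        _ = 3 * ((2:ℝ) ^ (2 * σb) * (hnormV3 σb b) ^ 2) := by
            rw [hnormV3_sq_eq]
            conv_rhs => rw [Finset.mul_sum]
      
    have hsqrt_f : Real.sqrt (∑' m : Z3, f m ^ 2) ≤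
        Real.sqrt 3 * (2:ℝ) ^ σb * hnormV3 σb b := by
      calc Real.sqrt (∑' m : Z3, f m ^ 2)
          ≤ Real.sqrt (3 * ((2:ℝ) ^ (2 * σb) * (hnormV3 σb b) ^ 2)) :=
            Real.sqrt_le_sqrt hf2_le
        _ = Real.sqrt 3 * (Real.sqrt ((2:ℝ) ^ (2 * σb)) * Real.sqrt ((hnormV3 σb b) ^ 2)) := by
            rw [Real.sqrt_mul (by norm_num : (0:ℝ) ≤ 3),
              Real.sqrt_mul (Real.rpow_nonneg (by norm_num) _)]
        _ = Real.sqrt 3 * (2:ℝ) ^ σb * hnormV3 σb b := by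
            rw [sqrt_two_rpow, Real.sqrt_sq hbV3nn]
            ring
    calc U = ∑' m : Z3, f m * g m := hUfg
      _ ≤ Real.sqrt (∑' m : Z3, f m ^ 2) * Real.sqrt (∑' m : Z3, g m ^ 2) := hkey
      _ = Real.sqrt (∑' m : Z3, f m ^ 2) * Real.sqrt Kβ := by rw [hg2eq]
      _ ≤ (Real.sqrt 3 * (2:ℝ) ^ σb * hnormV3 σb b) * Real.sqrt Kβ :=
          mul_le_mul_of_nonneg_right hsqrt_f hKβpos.le
      _ = Real.sqrt Kβ * (Real.sqrt 3 * (2:ℝ) ^ σb * hnormV3 σb b) := by ring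
  -- bound √Vsq by the Sobolev norm of V
  have hVnn : 0 ≤ hnorm (s - α) V := Real.sqrt_nonneg _
  have hVsq_le : Real.sqrt Vsq ≤ (2:ℝ) ^ (s - α) * hnorm (s - α) V := by
    have hptw : ∀ q : Z3, v q ^ 2 ≤
        (2:ℝ) ^ (2 * (s - α)) * ((1 + knorm q ^ (2 * (s - α))) * ‖V q‖ ^ 2) := by
      intro q
      have h1 := one_add_rpow_le (knorm_nonneg q) (by linarith : (0:ℝ) ≤ 2 * (s - α))
      have h2 : v q ^ 2 = ‖V q‖ ^ 2 * (1 + knorm q) ^ (2 * (s - α)) := by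
        rw [hvdef]
        simp only []
        rw [mul_pow, sq ((1 + knorm q) ^ (s - α)),
          ← Real.rpow_add (by linarith [knorm_nonneg q] : (0:ℝ) < 1 + knorm q)]
        ring_nf
      rw [h2]
      calc ‖V q‖ ^ 2 * (1 + knorm q) ^ (2 * (s - α))
          ≤ ‖V q‖ ^ 2 * ((2:ℝ) ^ (2 * (s - α)) * (1 + knorm q ^ (2 * (s - α)))) :=
            mul_le_mul_of_nonneg_left h1 (sq_nonneg _)
        _ = (2:ℝ) ^ (2 * (s - α)) * ((1 + knorm q ^ (2 * (s - α))) * ‖V q‖ ^ 2) := by ring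
    have hr : Summable (fun q : Z3 =>
        (2:ℝ) ^ (2 * (s - α)) * ((1 + knorm q ^ (2 * (s - α))) * ‖V q‖ ^ 2)) :=
      (smooth_weight_summable hV.2 (by linarith : (0:ℝ) ≤ s - α)).mul_left _
    have hVsq_le' : Vsq ≤ (2:ℝ) ^ (2 * (s - α)) * (hnorm (s - α) V) ^ 2 := by
      calc Vsq ≤ ∑' q : Z3, (2:ℝ) ^ (2 * (s - α)) * ((1 + knorm q ^ (2 * (s - α))) * ‖V q‖ ^ 2) :=
            Summable.tsum_le_tsum hptw hv2sum hr
        _ = (2:ℝ) ^ (2 * (s - α)) * ∑' q : Z3, (1 + knorm q ^ (2 * (s - α))) * ‖V q‖ ^ 2 :=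
            tsum_mul_left
        _ = (2:ℝ) ^ (2 * (s - α)) * (hnorm (s - α) V) ^ 2 := by rw [hnorm_sq_eq]
    calc Real.sqrt Vsq ≤ Real.sqrt ((2:ℝ) ^ (2 * (s - α)) * (hnorm (s - α) V) ^ 2) :=
          Real.sqrt_le_sqrt hVsq_le'
      _ = (2:ℝ) ^ (s - α) * hnorm (s - α) V := by
          rw [Real.sqrt_mul (Real.rpow_nonneg (by norm_num) _), sqrt_two_rpow,
            Real.sqrt_sq hVnn]
  -- final chain
  have hfinal : s * U * Real.sqrt Vsq ≤ C * hnormV3 σb b * hnorm (s - α) V := by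
    have h1 : s * U * Real.sqrt Vsq ≤
        s * (Real.sqrt Kβ * (Real.sqrt 3 * (2:ℝ) ^ σb * hnormV3 σb b)) *
          ((2:ℝ) ^ (s - α) * hnorm (s - α) V) := by
      apply mul_le_mul
      · exact mul_le_mul_of_nonneg_left hU_le hs0.le
      · exact hVsq_le
      · exact Real.sqrt_nonneg _
      · apply mul_nonneg hs0.le
        apply mul_nonneg hKβpos.le
        apply mul_nonneg (mul_nonneg (Real.sqrt_nonneg _) (Real.rpow_nonneg (by norm_num) _))
          hbV3nn
    calc s * U * Real.sqrt Vsq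
        ≤ s * (Real.sqrt Kβ * (Real.sqrt 3 * (2:ℝ) ^ σb * hnormV3 σb b)) *
          ((2:ℝ) ^ (s - α) * hnorm (s - α) V) := h1
      _ = C * hnormV3 σb b * hnorm (s - α) V := by
          rw [hCdef]
          ring
  calc l2norm (lam (-α) (commLam s b V)) = l2norm G := by rw [hGdef]
    _ ≤ s * U * Real.sqrt Vsq := hl2
    _ ≤ C * hnormV3 σb b * hnorm (s - α) V := hfinal
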